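/- (Hensel's Lemma over a commutative base ring.) Let R be a commutative ring and let F ∈ (R[[X]])[Y] be a monic polynomial of degree n > 1. Suppose we are given monic polynomials G₀, H₀ ∈ R[Y] of degrees r, s > 0 respectively with r + s = n, and polynomials G*, H* ∈ R[Y], such that the reduction of F modulo X equals G₀·H₀ and G₀·H* + H₀·G* = 1. Then there exist monic polynomials G, H ∈ (R[[X]])[Y] of degrees r and s respectively such that F = G·H, the reduction of G modulo X equals G₀, and the reduction of H modulo X equals H₀. -/

import Mathlib

open Polynomial


noncomputable section HenselAux

variable {R : Type*} [CommRing R]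

/-- The recursively constructed pair of coefficient polynomials. -/
noncomputable def henselSeq (Fk : ℕ → Polynomial R) (G₀ H₀ Gstar Hstar : Polynomial R) :
    ℕ → Polynomial R × Polynomial R
  | 0 => (G₀, H₀)
  | (k+1) =>
    (Gstar * (Fk (k+1) - ∑ i ∈ (Finset.Icc 1 k).attach,
        (henselSeq Fk G₀ H₀ Gstar Hstar i.1).1 *
        (henselSeq Fk G₀ H₀ Gstar Hstar (k+1-i.1)).2)
      + ((Hstar * (Fk (k+1) - ∑ i ∈ (Finset.Icc 1 k).attach,
        (henselSeq Fk G₀ H₀ Gstar Hstar i.1).1 *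
        (henselSeq Fk G₀ H₀ Gstar Hstar (k+1-i.1)).2)) /ₘ H₀) * G₀,
     (Hstar * (Fk (k+1) - ∑ i ∈ (Finset.Icc 1 k).attach,
        (henselSeq Fk G₀ H₀ Gstar Hstar i.1).1 *
        (henselSeq Fk G₀ H₀ Gstar Hstar (k+1-i.1)).2)) %ₘ H₀)
  termination_by k => k
  decreasing_by
    all_goals (have := Finset.mem_Icc.mp i.2; omega)

/-- The error term at stage `k+1`. -/
noncomputable def henselE (Fk : ℕ → Polynomial R) (G₀ H₀ Gstar Hstar : Polynomial R) (k : ℕ) :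
    Polynomial R :=
  Fk (k+1) - ∑ i ∈ Finset.Icc 1 k,
    (henselSeq Fk G₀ H₀ Gstar Hstar i).1 * (henselSeq Fk G₀ H₀ Gstar Hstar (k+1-i)).2

lemma henselSeq_succ (Fk : ℕ → Polynomial R) (G₀ H₀ Gstar Hstar : Polynomial R) (k : ℕ) :
    henselSeq Fk G₀ H₀ Gstar Hstar (k+1) =
      (Gstar * henselE Fk G₀ H₀ Gstar Hstar k
        + ((Hstar * henselE Fk G₀ H₀ Gstar Hstar k) /ₘ H₀) * G₀,
       (Hstar * henselE Fk G₀ H₀ Gstar Hstar k) %ₘ H₀) := by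
  rw [henselSeq, henselE,
    Finset.sum_attach (Finset.Icc 1 k) (fun i => (henselSeq Fk G₀ H₀ Gstar Hstar i).1 *
      (henselSeq Fk G₀ H₀ Gstar Hstar (k+1-i)).2)]


/-- The key identity `G₀ * h_{k+1} + H₀ * g_{k+1} = E_k`. -/
lemma henselSeq_key (Fk : ℕ → Polynomial R) (G₀ H₀ Gstar Hstar : Polynomial R)
    (hH₀monic : H₀.Monic) (hbezout : G₀ * Hstar + H₀ * Gstar = 1) (k : ℕ) :
    G₀ * (henselSeq Fk G₀ H₀ Gstar Hstar (k+1)).2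
      + H₀ * (henselSeq Fk G₀ H₀ Gstar Hstar (k+1)).1
      = henselE Fk G₀ H₀ Gstar Hstar k := by
  rw [henselSeq_succ]
  have hmd := modByMonic_add_div (Hstar * henselE Fk G₀ H₀ Gstar Hstar k) H₀
  dsimp only
  linear_combination G₀ * hmd + henselE Fk G₀ H₀ Gstar Hstar k * hbezout


/-- Degree bounds for the constructed sequence. -/
lemma henselSeq_deg (Fk : ℕ → Polynomial R) (G₀ H₀ Gstar Hstar : Polynomial R)
    {n r s : ℕ} (hr : 0 < r) (hs : 0 < s) (hrs : r + s = n)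
    (hG₀monic : G₀.Monic) (hH₀monic : H₀.Monic)
    (hG₀deg : G₀.natDegree = r) (hH₀deg : H₀.natDegree = s)
    (hbezout : G₀ * Hstar + H₀ * Gstar = 1)
    (hFk : ∀ k, 0 < k → (Fk k).natDegree < n) :
    ∀ k, 0 < k → (henselSeq Fk G₀ H₀ Gstar Hstar k).1.natDegree < r ∧
      (henselSeq Fk G₀ H₀ Gstar Hstar k).2.natDegree < s := by
  intro k
  induction k using Nat.strong_induction_on with
  | _ k IH =>
    intro hk
    obtain ⟨k, rfl⟩ : ∃ m, k = m + 1 := ⟨k - 1, by omega⟩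
    have hH₀ne1 : H₀ ≠ 1 := by
      intro h; rw [h, natDegree_one] at hH₀deg; omega
    have hE : (henselE Fk G₀ H₀ Gstar Hstar k).natDegree < n := by
      have h1 : (∑ i ∈ Finset.Icc 1 k, (henselSeq Fk G₀ H₀ Gstar Hstar i).1 *
          (henselSeq Fk G₀ H₀ Gstar Hstar (k+1-i)).2).natDegree ≤ n - 1 := by
        apply natDegree_sum_le_of_forall_le
        intro i hi
        obtain ⟨hi1, hi2⟩ := Finset.mem_Icc.mp hi
        have h2 := IH i (by omega) (by omega)
        have h3 := IH (k+1-i) (by omega) (by omega)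
        calc ((henselSeq Fk G₀ H₀ Gstar Hstar i).1 *
              (henselSeq Fk G₀ H₀ Gstar Hstar (k+1-i)).2).natDegree
            ≤ (henselSeq Fk G₀ H₀ Gstar Hstar i).1.natDegree +
              (henselSeq Fk G₀ H₀ Gstar Hstar (k+1-i)).2.natDegree := natDegree_mul_le
          _ ≤ n - 1 := by omega
      have h0 := hFk (k+1) (by omega)
      rw [henselE]
      have h4 := natDegree_sub_le (Fk (k+1))
        (∑ i ∈ Finset.Icc 1 k, (henselSeq Fk G₀ H₀ Gstar Hstar i).1 *
          (henselSeq Fk G₀ H₀ Gstar Hstar (k+1-i)).2)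
      have h5 : max (Fk (k+1)).natDegree (∑ i ∈ Finset.Icc 1 k,
          (henselSeq Fk G₀ H₀ Gstar Hstar i).1 *
          (henselSeq Fk G₀ H₀ Gstar Hstar (k+1-i)).2).natDegree ≤ n - 1 :=
        max_le (by omega) h1
      omega
    have hh' : (henselSeq Fk G₀ H₀ Gstar Hstar (k+1)).2.natDegree < s := by
      rw [henselSeq_succ]
      dsimp only
      have := natDegree_modByMonic_lt (Hstar * henselE Fk G₀ H₀ Gstar Hstar k) hH₀monic hH₀ne1
      omega
    refine ⟨?_, hh'⟩
    have key := henselSeq_key Fk G₀ H₀ Gstar Hstar hH₀monic hbezout k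
    rcases eq_or_ne (henselSeq Fk G₀ H₀ Gstar Hstar (k+1)).1 0 with h0 | h0
    · rw [h0, natDegree_zero]; omega
    · have hmul : (H₀ * (henselSeq Fk G₀ H₀ Gstar Hstar (k+1)).1).natDegree
          = s + (henselSeq Fk G₀ H₀ Gstar Hstar (k+1)).1.natDegree := by
        rw [hH₀monic.natDegree_mul' h0, hH₀deg]
      have heq : H₀ * (henselSeq Fk G₀ H₀ Gstar Hstar (k+1)).1
          = henselE Fk G₀ H₀ Gstar Hstar k
            - G₀ * (henselSeq Fk G₀ H₀ Gstar Hstar (k+1)).2 := by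
        linear_combination key
      have hGh : (G₀ * (henselSeq Fk G₀ H₀ Gstar Hstar (k+1)).2).natDegree ≤ n - 1 := by
        calc (G₀ * (henselSeq Fk G₀ H₀ Gstar Hstar (k+1)).2).natDegree
            ≤ G₀.natDegree + (henselSeq Fk G₀ H₀ Gstar Hstar (k+1)).2.natDegree :=
              natDegree_mul_le
          _ ≤ n - 1 := by omega
      have h6 := natDegree_sub_le (henselE Fk G₀ H₀ Gstar Hstar k)
        (G₀ * (henselSeq Fk G₀ H₀ Gstar Hstar (k+1)).2)
      have h7 : max (henselE Fk G₀ H₀ Gstar Hstar k).natDegree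
          (G₀ * (henselSeq Fk G₀ H₀ Gstar Hstar (k+1)).2).natDegree ≤ n - 1 :=
        max_le (by omega) hGh
      rw [heq] at hmul
      omega


lemma henselSeq_zero (Fk : ℕ → Polynomial R) (G₀ H₀ Gstar Hstar : Polynomial R) :
    henselSeq Fk G₀ H₀ Gstar Hstar 0 = (G₀, H₀) := by rw [henselSeq]

/-- The convolution identity: the product of the two power series built from the
sequences has coefficients `Fk`. -/
lemma henselSeq_conv (Fk : ℕ → Polynomial R) (G₀ H₀ Gstar Hstar : Polynomial R)
    (hH₀monic : H₀.Monic) (hF0 : Fk 0 = G₀ * H₀)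
    (hbezout : G₀ * Hstar + H₀ * Gstar = 1) :
    ∀ k, ∑ i ∈ Finset.range (k+1), (henselSeq Fk G₀ H₀ Gstar Hstar i).1 *
      (henselSeq Fk G₀ H₀ Gstar Hstar (k-i)).2 = Fk k := by
  intro k
  match k with
  | 0 => simp [henselSeq_zero, hF0]
  | (k+1) =>
    rw [Finset.sum_range_succ' (fun i => (henselSeq Fk G₀ H₀ Gstar Hstar i).1 *
      (henselSeq Fk G₀ H₀ Gstar Hstar (k+1-i)).2) (k+1)]
    simp only [Nat.succ_sub_succ_eq_sub, Nat.sub_zero]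
    rw [Finset.sum_range_succ]
    simp only [Nat.sub_self, henselSeq_zero]
    have hmid : ∑ i ∈ Finset.Icc 1 k, (henselSeq Fk G₀ H₀ Gstar Hstar i).1 *
        (henselSeq Fk G₀ H₀ Gstar Hstar (k+1-i)).2
        = ∑ i ∈ Finset.range k, (henselSeq Fk G₀ H₀ Gstar Hstar (i+1)).1 *
          (henselSeq Fk G₀ H₀ Gstar Hstar (k-i)).2 := by
      rw [← Finset.Ico_add_one_right_eq_Icc, Finset.sum_Ico_eq_sum_range]
      simp only [Nat.add_sub_cancel, Nat.succ_sub_one]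
      apply Finset.sum_congr rfl
      intro i hi
      have hik := Finset.mem_range.mp hi
      have h1 : 1 + i = i + 1 := by omega
      have h2 : k + 1 - (i + 1) = k - i := by omega
      rw [h1, h2]
    have key := henselSeq_key Fk G₀ H₀ Gstar Hstar hH₀monic hbezout k
    rw [henselE, hmid] at key
    linear_combination key

end HenselAux

noncomputable section HenselPhi

variable {R : Type*} [CommRing R]

/-- The transfer ring homomorphism `(R[[X]])[Y] → (R[Y])[[X]]`. -/
noncomputable def polyPS : Polynomial (PowerSeries R) →+* PowerSeries (Polynomial R) :=
  Polynomial.eval₂RingHom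
    (PowerSeries.map (Polynomial.C : R →+* Polynomial R))
    (PowerSeries.C Polynomial.X)

lemma coeff_polyPS (P : Polynomial (PowerSeries R)) (k : ℕ) :
    PowerSeries.coeff k (polyPS P)
      = P.sum fun j a => Polynomial.C (PowerSeries.coeff k a) * Polynomial.X ^ j := by
  rw [polyPS, coe_eval₂RingHom, eval₂_eq_sum, Polynomial.sum_def, Polynomial.sum_def, map_sum]
  apply Finset.sum_congr rfl
  intro j _
  rw [← map_pow, PowerSeries.coeff_mul_C, PowerSeries.coeff_map]

lemma coeff_coeff_polyPS (P : Polynomial (PowerSeries R)) (k j : ℕ) :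
    (PowerSeries.coeff k (polyPS P)).coeff j
      = PowerSeries.coeff k (P.coeff j) := by
  rw [coeff_polyPS, Polynomial.sum_def, finset_sum_coeff]
  simp only [coeff_C_mul, coeff_X_pow, mul_ite, mul_one, mul_zero]
  rw [Finset.sum_ite_eq P.support j (fun i => PowerSeries.coeff k (P.coeff i))]
  by_cases hj : j ∈ P.support
  · rw [if_pos hj]
  · rw [if_neg hj, Polynomial.notMem_support_iff.mp hj, map_zero]

end HenselPhi


/-- Hensel's Lemma over a commutative base ring: a factorization of the reduction of a
monic `F ∈ (R[[X]])[Y]` modulo `X` into comaximal monic factors of positive degrees lifts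
to a factorization of `F`. -/
theorem statement3 {R : Type*} [CommRing R] (n : ℕ) (hn : 1 < n)
    (F : Polynomial (PowerSeries R)) (hFmonic : F.Monic) (hFdeg : F.natDegree = n)
    (r s : ℕ) (hr : 0 < r) (hs : 0 < s) (hrs : r + s = n)
    (G₀ H₀ Gstar Hstar : Polynomial R)
    (hG₀monic : G₀.Monic) (hH₀monic : H₀.Monic)
    (hG₀deg : G₀.natDegree = r) (hH₀deg : H₀.natDegree = s)
    (hF0 : F.map (PowerSeries.constantCoeff (R := R)) = G₀ * H₀)
    (hbezout : G₀ * Hstar + H₀ * Gstar = 1) :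
    ∃ G H : Polynomial (PowerSeries R),
      G.Monic ∧ H.Monic ∧ G.natDegree = r ∧ H.natDegree = s ∧
      F = G * H ∧
      G.map (PowerSeries.constantCoeff (R := R)) = G₀ ∧
      H.map (PowerSeries.constantCoeff (R := R)) = H₀ := by
  have hNT : Nontrivial R := by
    rcases subsingleton_or_nontrivial R with h | h
    · exfalso
      have hF : F = 0 := Subsingleton.elim _ _
      rw [hF, natDegree_zero] at hFdeg
      omega
    · exact h
  set Fk : ℕ → Polynomial R := fun k => PowerSeries.coeff k (polyPS F)
    with hFk_def
  -- the coefficients of `Fk`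
  have hFk_coeff : ∀ k j, (Fk k).coeff j = PowerSeries.coeff k (F.coeff j) := by
    intro k j
    simp only [hFk_def]
    exact coeff_coeff_polyPS F k j
  have hFk0 : Fk 0 = G₀ * H₀ := by
    rw [← hF0]
    ext j
    rw [hFk_coeff, Polynomial.coeff_map, PowerSeries.coeff_zero_eq_constantCoeff]
  have hFkdeg : ∀ k, 0 < k → (Fk k).natDegree < n := by
    intro k hk
    have hle : (Fk k).natDegree ≤ n - 1 := by
      rw [natDegree_le_iff_coeff_eq_zero]
      intro m hm
      rw [hFk_coeff]
      rcases eq_or_lt_of_le (show n ≤ m by omega) with heq | hlt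
      · have h1 : F.coeff n = 1 := by
          have := hFmonic.coeff_natDegree
          rwa [hFdeg] at this
        rw [← heq, h1, PowerSeries.coeff_one, if_neg (by omega)]
      · rw [Polynomial.coeff_eq_zero_of_natDegree_lt (by omega), map_zero]
    omega
  -- the sequence
  have hseq := henselSeq_deg Fk G₀ H₀ Gstar Hstar hr hs hrs hG₀monic hH₀monic hG₀deg hH₀deg
    hbezout hFkdeg
  have hg0 : (henselSeq Fk G₀ H₀ Gstar Hstar 0).1 = G₀ := by rw [henselSeq_zero]
  have hh0 : (henselSeq Fk G₀ H₀ Gstar Hstar 0).2 = H₀ := by rw [henselSeq_zero]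
  have hgdeg : ∀ k, (henselSeq Fk G₀ H₀ Gstar Hstar k).1.natDegree < r + 1 := by
    intro k
    rcases Nat.eq_zero_or_pos k with rfl | hk
    · rw [hg0, hG₀deg]; omega
    · have := (hseq k hk).1; omega
  have hhdeg : ∀ k, (henselSeq Fk G₀ H₀ Gstar Hstar k).2.natDegree < s + 1 := by
    intro k
    rcases Nat.eq_zero_or_pos k with rfl | hk
    · rw [hh0, hH₀deg]; omega
    · have := (hseq k hk).2; omega
  -- the lifted factors
  set G : Polynomial (PowerSeries R) := ∑ j ∈ Finset.range (r+1),
    C (PowerSeries.mk fun k => (henselSeq Fk G₀ H₀ Gstar Hstar k).1.coeff j) * X ^ j with hG_def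
  set H : Polynomial (PowerSeries R) := ∑ j ∈ Finset.range (s+1),
    C (PowerSeries.mk fun k => (henselSeq Fk G₀ H₀ Gstar Hstar k).2.coeff j) * X ^ j with hH_def
  have hGcoeff : ∀ j, G.coeff j = if j < r + 1 then
      (PowerSeries.mk fun k => (henselSeq Fk G₀ H₀ Gstar Hstar k).1.coeff j) else 0 := by
    intro j
    rw [hG_def, finset_sum_coeff]
    simp only [coeff_C_mul, coeff_X_pow, mul_ite, mul_one, mul_zero]
    rw [Finset.sum_ite_eq (Finset.range (r+1)) j]
    simp [Finset.mem_range]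
  have hHcoeff : ∀ j, H.coeff j = if j < s + 1 then
      (PowerSeries.mk fun k => (henselSeq Fk G₀ H₀ Gstar Hstar k).2.coeff j) else 0 := by
    intro j
    rw [hH_def, finset_sum_coeff]
    simp only [coeff_C_mul, coeff_X_pow, mul_ite, mul_one, mul_zero]
    rw [Finset.sum_ite_eq (Finset.range (s+1)) j]
    simp [Finset.mem_range]
  have hGdegle : G.natDegree ≤ r := by
    rw [hG_def]
    apply natDegree_sum_le_of_forall_le
    intro j hj
    refine le_trans natDegree_mul_le ?_
    rw [natDegree_C, natDegree_X_pow, zero_add]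
    exact Nat.lt_succ_iff.mp (Finset.mem_range.mp hj)
  have hHdegle : H.natDegree ≤ s := by
    rw [hH_def]
    apply natDegree_sum_le_of_forall_le
    intro j hj
    refine le_trans natDegree_mul_le ?_
    rw [natDegree_C, natDegree_X_pow, zero_add]
    exact Nat.lt_succ_iff.mp (Finset.mem_range.mp hj)
  -- images under polyPS
  have hΦG : polyPS G = PowerSeries.mk fun k => (henselSeq Fk G₀ H₀ Gstar Hstar k).1 := by
    ext k
    rw [coeff_polyPS, PowerSeries.coeff_mk]
    rw [Polynomial.sum_over_range' G (by intro m; simp) (r+1) (by omega)]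
    have : ∀ j ∈ Finset.range (r+1),
        C (PowerSeries.coeff k (G.coeff j)) * (X : Polynomial R) ^ j
          = C ((henselSeq Fk G₀ H₀ Gstar Hstar k).1.coeff j) * X ^ j := by
      intro j hj
      rw [hGcoeff j, if_pos (Finset.mem_range.mp hj), PowerSeries.coeff_mk]
    rw [Finset.sum_congr rfl this]
    conv_rhs => rw [as_sum_range' _ (r+1) (hgdeg k)]
    simp only [← C_mul_X_pow_eq_monomial]
  have hΦH : polyPS H = PowerSeries.mk fun k => (henselSeq Fk G₀ H₀ Gstar Hstar k).2 := by
    ext k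
    rw [coeff_polyPS, PowerSeries.coeff_mk]
    rw [Polynomial.sum_over_range' H (by intro m; simp) (s+1) (by omega)]
    have : ∀ j ∈ Finset.range (s+1),
        C (PowerSeries.coeff k (H.coeff j)) * (X : Polynomial R) ^ j
          = C ((henselSeq Fk G₀ H₀ Gstar Hstar k).2.coeff j) * X ^ j := by
      intro j hj
      rw [hHcoeff j, if_pos (Finset.mem_range.mp hj), PowerSeries.coeff_mk]
    rw [Finset.sum_congr rfl this]
    conv_rhs => rw [as_sum_range' _ (s+1) (hhdeg k)]
    simp only [← C_mul_X_pow_eq_monomial]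
  have hΦF : polyPS F = polyPS G * polyPS H := by
    rw [hΦG, hΦH]
    apply PowerSeries.ext
    intro k
    rw [PowerSeries.coeff_mul, Finset.Nat.sum_antidiagonal_eq_sum_range_succ_mk]
    simp only [PowerSeries.coeff_mk]
    exact (henselSeq_conv Fk G₀ H₀ Gstar Hstar hH₀monic hFk0 hbezout k).symm
  -- the factorization
  have hFGH : F = G * H := by
    apply Polynomial.ext
    intro j
    apply PowerSeries.ext
    intro k
    rw [← coeff_coeff_polyPS, ← coeff_coeff_polyPS, map_mul, ← hΦF]
  -- top coefficients
  have hGr : G.coeff r = 1 := by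
    rw [hGcoeff r, if_pos (by omega)]
    apply PowerSeries.ext
    intro k
    rw [PowerSeries.coeff_mk, PowerSeries.coeff_one]
    rcases Nat.eq_zero_or_pos k with rfl | hk
    · rw [if_pos rfl, hg0]
      have := hG₀monic.coeff_natDegree
      rwa [hG₀deg] at this
    · rw [if_neg (by omega)]
      exact Polynomial.coeff_eq_zero_of_natDegree_lt (hseq k hk).1
  have hHs : H.coeff s = 1 := by
    rw [hHcoeff s, if_pos (by omega)]
    apply PowerSeries.ext
    intro k
    rw [PowerSeries.coeff_mk, PowerSeries.coeff_one]
    rcases Nat.eq_zero_or_pos k with rfl | hk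
    · rw [if_pos rfl, hh0]
      have := hH₀monic.coeff_natDegree
      rwa [hH₀deg] at this
    · rw [if_neg (by omega)]
      exact Polynomial.coeff_eq_zero_of_natDegree_lt (hseq k hk).2
  have hGdeg : G.natDegree = r :=
    le_antisymm hGdegle (le_natDegree_of_ne_zero (by rw [hGr]; exact one_ne_zero))
  have hHdeg : H.natDegree = s :=
    le_antisymm hHdegle (le_natDegree_of_ne_zero (by rw [hHs]; exact one_ne_zero))
  have hGmonic : G.Monic := by rw [Monic, leadingCoeff, hGdeg, hGr]
  have hHmonic : H.Monic := by rw [Monic, leadingCoeff, hHdeg, hHs]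
  -- reductions mod X
  have hGmap : G.map (PowerSeries.constantCoeff (R := R)) = G₀ := by
    rw [hG_def, Polynomial.map_sum]
    simp only [Polynomial.map_mul, Polynomial.map_C, Polynomial.map_pow, Polynomial.map_X,
      PowerSeries.constantCoeff_mk]
    conv_rhs => rw [as_sum_range' G₀ (r+1) (by rw [hG₀deg]; omega)]
    simp only [← C_mul_X_pow_eq_monomial]
    exact Finset.sum_congr rfl fun j _ => by rw [hg0]
  have hHmap : H.map (PowerSeries.constantCoeff (R := R)) = H₀ := by
    rw [hH_def, Polynomial.map_sum]
    simp only [Polynomial.map_mul, Polynomial.map_C, Polynomial.map_pow, Polynomial.map_X,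
      PowerSeries.constantCoeff_mk]
    conv_rhs => rw [as_sum_range' H₀ (s+1) (by rw [hH₀deg]; omega)]
    simp only [← C_mul_X_pow_eq_monomial]
    exact Finset.sum_congr rfl fun j _ => by rw [hh0]
  exact ⟨G, H, hGmonic, hHmonic, hGdeg, hHdeg, hFGH, hGmap, hHmap⟩
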